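/- arXiv:2507.11648 — 3 statements merged into one kernel-verified Lean document; each statement's English description precedes it below -/
import Mathlib

section
/- For every real r with |r| < 1, the complete elliptic integral of the first kind satisfies K(r) = ∫₀¹ dt/√((1−t²)(1−r²t²)) = (π/2)·Σ_{n=0}^∞ [((1/2)_n)² / ((1)_n · n!)] · r^{2n}, i.e. K(r) = (π/2)·₂F₁(1/2, 1/2; 1; r²), where the series on the right converges. -/
/-- The complete elliptic integral of the first kind `K(r)`. -/
noncomputable def ellK (r : ℝ) : ℝ :=
  ∫ t in (0:ℝ)..1, 1 / Real.sqrt ((1 - t ^ 2) * (1 - r ^ 2 * t ^ 2))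

/-- The Pochhammer symbol `(q)_n = q(q+1)⋯(q+n−1)`, with `(q)_0 = 1`. -/
noncomputable def poch (q : ℝ) (n : ℕ) : ℝ :=
  ∏ i ∈ Finset.range n, (q + i)

open Real MeasureTheory Set intervalIntegral
open scoped Nat

noncomputable def A (n : ℕ) : ℝ := poch (1/2) n / n !

lemma poch_one (n : ℕ) : poch 1 n = n ! := by
  induction n with
  | zero => simp [poch]
  | succ k ih =>
    rw [poch, Finset.prod_range_succ, ← poch, ih, Nat.factorial_succ]
    push_cast; ring

lemma poch_half_pos (n : ℕ) : 0 < poch (1/2) n :=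
  Finset.prod_pos (fun i _ => by positivity)

lemma A_pos (n : ℕ) : 0 < A n := div_pos (poch_half_pos n) (by positivity)

lemma A_le_one (n : ℕ) : A n ≤ 1 := by
  rw [A, div_le_one (by positivity), ← poch_one]
  exact Finset.prod_le_prod (fun i _ => by positivity) (fun i _ => by norm_num)

lemma A_zero : A 0 = 1 := by simp [A, poch]

lemma A_succ (n : ℕ) : A (n+1) * (n+1) = ((n:ℝ) + 1/2) * A n := by
  have h : (n ! : ℝ) ≠ 0 := by positivity
  rw [A, A, poch, Finset.prod_range_succ, ← poch, Nat.factorial_succ]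
  push_cast
  field_simp
  ring

lemma wallis (n : ℕ) : (∫ x in (0:ℝ)..(π/2), sin x ^ (2*n)) = π/2 * A n := by
  induction n with
  | zero => simp [A_zero]
  | succ k ih =>
    have h := integral_sin_pow (a := 0) (b := π/2) (n := 2*k)
    rw [show 2*(k+1) = 2*k+2 by ring, h, ih]
    have h1 := A_succ k
    have h2 : ((2*k:ℕ):ℝ) + 2 ≠ 0 := by positivity
    simp only [Real.sin_zero, Real.cos_pi_div_two]
    push_cast at h1 ⊢
    have hk : (k:ℝ) + 1 ≠ 0 := by positivity
    field_simp
    linear_combination (-2*π) * h1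

lemma summable_A_mul {x : ℝ} (hx : |x| < 1) : Summable (fun n => A n * x ^ n) := by
  apply Summable.of_norm_bounded (summable_geometric_of_lt_one (abs_nonneg x) hx)
  intro n
  rw [norm_mul, norm_pow, Real.norm_eq_abs, Real.norm_eq_abs,
    abs_of_pos (A_pos n)]
  calc A n * |x| ^ n ≤ 1 * |x| ^ n := by
        apply mul_le_mul_of_nonneg_right (A_le_one n) (by positivity)
    _ = |x| ^ n := one_mul _

lemma binomial_half {x : ℝ} (hx0 : 0 ≤ x) (hx1 : x < 1) :
    ∑' n, A n * x ^ n = 1 / Real.sqrt (1 - x) := by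
  set c : ℝ := (1 + x) / 2 with hc
  have hc0 : 0 < c := by simp [hc]; linarith
  have hc1 : c < 1 := by simp [hc]; linarith
  have hxc : x < c := by simp [hc]; linarith
  set t : Set ℝ := Ioo (-c) c with ht
  have hto : IsOpen t := isOpen_Ioo
  have htp : IsPreconnected t := isPreconnected_Ioo
  have h0t : (0:ℝ) ∈ t := ⟨by linarith, hc0⟩
  set g : ℕ → ℝ → ℝ := fun n y => A n * y ^ n with hg
  set g' : ℕ → ℝ → ℝ := fun n y => A n * (n * y ^ (n-1)) with hg'
  set u : ℕ → ℝ := fun n => (n:ℝ) * c ^ (n-1) with hu_def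
  have hu : Summable u := by
    rw [← summable_nat_add_iff 1]
    have : Summable (fun n : ℕ => ((n:ℝ) + 1) * c ^ n) := by
      have h1 : Summable (fun n : ℕ => (n:ℝ) * c ^ n) := by
        simpa using summable_pow_mul_geometric_of_norm_lt_one 1
          (r := c) (by rwa [Real.norm_eq_abs, abs_of_pos hc0])
      have h2 : Summable (fun n : ℕ => c ^ n) :=
        summable_geometric_of_lt_one hc0.le hc1
      simpa [add_mul] using h1.add h2
    apply this.congr
    intro n
    simp [hu_def]
  have hgderiv : ∀ n y, y ∈ t → HasDerivAt (g n) (g' n y) y := fun n y _ =>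
    (hasDerivAt_pow n y).const_mul (A n)
  have hbound : ∀ n y, y ∈ t → ‖g' n y‖ ≤ u n := by
    intro n y hy
    have hyc : |y| ≤ c := le_of_lt (abs_lt.2 ⟨hy.1, hy.2⟩)
    rw [hg', hu_def]
    simp only [norm_mul, Real.norm_eq_abs, abs_of_pos (A_pos n), Nat.abs_cast, abs_pow]
    calc A n * ((n:ℝ) * |y| ^ (n-1)) ≤ 1 * ((n:ℝ) * c ^ (n-1)) := by
          apply mul_le_mul (A_le_one n)
          · exact mul_le_mul_of_nonneg_left (pow_le_pow_left₀ (abs_nonneg y) hyc _) (by positivity)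
          · positivity
          · norm_num
      _ = (n:ℝ) * c ^ (n-1) := one_mul _
  have hg0 : Summable (fun n => g n 0) := by
    apply summable_of_ne_finset_zero (s := {0})
    intro n hn
    simp only [Finset.mem_singleton] at hn
    simp [hg, zero_pow hn]
  set F : ℝ → ℝ := fun y => ∑' n, A n * y ^ n with hF
  have hFderiv : ∀ y ∈ t, HasDerivAt F (∑' n, g' n y) y := fun y hy =>
    hasDerivAt_tsum_of_isPreconnected hu hto htp hgderiv hbound h0t hg0 hy
  -- summabilities at fixed y ∈ t
  have habs : ∀ y ∈ t, |y| < 1 := fun y hy => lt_trans (abs_lt.2 ⟨hy.1, hy.2⟩) hc1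
  have hSA : ∀ y ∈ t, Summable (fun n => A n * y ^ n) := fun y hy =>
    summable_A_mul (habs y hy)
  have hgeom : ∀ y ∈ t, Summable (fun n : ℕ => ((n:ℝ)+1) * |y| ^ n) := by
    intro y hy
    have h1 : Summable (fun n : ℕ => (n:ℝ) * |y| ^ n) := by
      simpa using summable_pow_mul_geometric_of_norm_lt_one 1
        (r := |y|) (by rw [Real.norm_eq_abs, abs_abs]; exact habs y hy)
    have h2 : Summable (fun n : ℕ => |y| ^ n) :=
      summable_geometric_of_lt_one (abs_nonneg y) (habs y hy)
    simpa [add_mul] using h1.add h2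
  have hSB : ∀ y ∈ t, Summable (fun n : ℕ => (n:ℝ) * A n * y ^ n) := by
    intro y hy
    apply Summable.of_norm_bounded (hgeom y hy)
    intro n
    simp only [norm_mul, Real.norm_eq_abs, Nat.abs_cast, abs_pow, abs_of_pos (A_pos n)]
    have h1 : (n:ℝ) * A n ≤ (n:ℝ) + 1 := by
      nlinarith [A_le_one n, A_pos n, Nat.cast_nonneg (α := ℝ) n]
    nlinarith [mul_le_mul_of_nonneg_right h1 (pow_nonneg (abs_nonneg y) n)]
  have hSA' : ∀ y ∈ t, Summable (fun n : ℕ => ((n:ℝ) + 1/2) * A n * y ^ n) := by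
    intro y hy
    apply Summable.of_norm_bounded (hgeom y hy)
    intro n
    simp only [norm_mul, Real.norm_eq_abs, abs_pow, abs_of_pos (A_pos n)]
    have h0 : |(n:ℝ) + 1/2| = (n:ℝ) + 1/2 := abs_of_pos (by positivity)
    rw [h0]
    have h1 : ((n:ℝ) + 1/2) * A n ≤ (n:ℝ) + 1 := by
      nlinarith [A_le_one n, A_pos n, Nat.cast_nonneg (α := ℝ) n]
    exact mul_le_mul_of_nonneg_right h1 (by positivity)
  have hSD : ∀ y ∈ t, Summable (fun n => g' n y) := fun y hy =>
    Summable.of_norm_bounded hu (fun n => hbound n y hy)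
  -- the ODE : (1 - y) * D y = F y / 2
  have hODE : ∀ y ∈ t, (1 - y) * (∑' n, g' n y) = F y / 2 := by
    intro y hy
    have K1 : (∑' n, g' n y) = ∑' n : ℕ, ((n:ℝ) + 1/2) * A n * y ^ n := by
      rw [(hSD y hy).tsum_eq_zero_add]
      have : ∀ n : ℕ, g' (n+1) y = ((n:ℝ) + 1/2) * A n * y ^ n := by
        intro n
        have h := A_succ n
        simp only [hg', Nat.add_sub_cancel, Nat.cast_add, Nat.cast_one]
        linear_combination (y ^ n) * h
      rw [tsum_congr this]
      simp [hg']
    have K2 : y * (∑' n : ℕ, ((n:ℝ) + 1/2) * A n * y ^ n)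
        = ∑' n : ℕ, (n:ℝ) * A n * y ^ n := by
      rw [← tsum_mul_left]
      conv_rhs => rw [(hSB y hy).tsum_eq_zero_add]
      simp only [Nat.cast_zero, zero_mul, zero_add, Nat.cast_add, Nat.cast_one]
      apply tsum_congr
      intro n
      have h := A_succ n
      linear_combination (-(y ^ (n+1))) * h
    calc (1 - y) * (∑' n, g' n y)
        = (∑' n : ℕ, ((n:ℝ)+1/2) * A n * y ^ n)
          - y * (∑' n : ℕ, ((n:ℝ)+1/2) * A n * y ^ n) := by rw [K1]; ring
      _ = (∑' n : ℕ, ((n:ℝ)+1/2) * A n * y ^ n)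
          - ∑' n : ℕ, (n:ℝ) * A n * y ^ n := by rw [K2]
      _ = ∑' n : ℕ, (((n:ℝ)+1/2) * A n * y ^ n - (n:ℝ) * A n * y ^ n) :=
          ((hSA' y hy).tsum_sub (hSB y hy)).symm
      _ = ∑' n : ℕ, (A n * y ^ n) * (1/2) := tsum_congr (fun n => by ring)
      _ = F y / 2 := by rw [tsum_mul_right]; ring
  have hh : ∀ y ∈ t, HasDerivAt (fun z => (1 - z) * F z ^ 2) 0 y := by
    intro y hy
    have h1 : HasDerivAt (fun z : ℝ => 1 - z) (-1) y := (hasDerivAt_id y).const_sub 1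
    have h2 : HasDerivAt (fun z => F z ^ 2)
        (2 * F y ^ 1 * (∑' n, g' n y)) y := (hFderiv y hy).pow 2
    have h3 := h1.mul h2
    refine h3.congr_deriv ?_
    have hO := hODE y hy
    linear_combination (2 * F y) * hO
  have hsub : Icc (0:ℝ) x ⊆ t := fun z hz =>
    ⟨by simp only [mem_Icc] at hz; linarith [hz.1], lt_of_le_of_lt hz.2 hxc⟩
  have hcont : ContinuousOn (fun z => (1 - z) * F z ^ 2) (Icc 0 x) := fun z hz =>
    ((hh z (hsub hz)).continuousAt).continuousWithinAt
  have hder : ∀ z ∈ Ico 0 x, HasDerivWithinAt (fun z => (1 - z) * F z ^ 2) 0 (Ici z) z :=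
    fun z hz => (hh z (hsub ⟨hz.1, hz.2.le⟩)).hasDerivWithinAt
  have hconst := constant_of_has_deriv_right_zero hcont hder x (right_mem_Icc.2 hx0)
  have hF0 : F 0 = 1 := by
    show (∑' n : ℕ, A n * (0:ℝ) ^ n) = 1
    rw [tsum_eq_single 0 (fun n hn => by simp [zero_pow hn])]
    simp [A_zero]
  simp only [hF0, sub_zero, one_pow, mul_one] at hconst
  have hSx : Summable (fun n => A n * x ^ n) :=
    summable_A_mul (by rwa [abs_of_nonneg hx0])
  have hFx_pos : 0 < F x := by
    have hle := hSx.le_tsum 0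
      (fun i _ => mul_nonneg (A_pos i).le (pow_nonneg hx0 i))
    simp only [pow_zero, mul_one, A_zero] at hle
    exact lt_of_lt_of_le one_pos hle
  have h1x : (0:ℝ) < 1 - x := by linarith
  have hsq : F x ^ 2 = 1 / (1 - x) := by
    field_simp
    linarith [hconst]
  have h2 : Real.sqrt (F x ^ 2) = Real.sqrt (1 / (1 - x)) := by rw [hsq]
  rw [Real.sqrt_sq hFx_pos.le, one_div, Real.sqrt_inv, ← one_div] at h2
  exact h2

lemma sin_image : Real.sin '' Ioo 0 (π/2) = Ioo 0 1 := by
  ext y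
  constructor
  · rintro ⟨θ, hθ, rfl⟩
    have h1 : 0 < Real.sin θ := Real.sin_pos_of_pos_of_lt_pi hθ.1 (by linarith [hθ.2, pi_pos])
    have h2 : Real.sin θ < 1 := by
      have := Real.strictMonoOn_sin
        (Set.mem_Icc.2 ⟨by linarith [hθ.1, pi_pos], hθ.2.le⟩)
        (Set.mem_Icc.2 ⟨by linarith [pi_pos], le_refl _⟩) hθ.2
      simpa using this
    exact ⟨h1, h2⟩
  · rintro ⟨h1, h2⟩
    refine ⟨Real.arcsin y, ⟨Real.arcsin_pos.2 h1, Real.arcsin_lt_pi_div_two.2 h2⟩, ?_⟩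
    exact Real.sin_arcsin (by linarith) (by linarith)

lemma ellK_eq_trig (r : ℝ) :
    ellK r = ∫ θ in (0:ℝ)..(π/2), 1 / Real.sqrt (1 - r^2 * Real.sin θ ^ 2) := by
  have hπ : (0:ℝ) ≤ π/2 := by positivity
  rw [ellK, integral_of_le zero_le_one, integral_of_le hπ,
    integral_Ioc_eq_integral_Ioo, integral_Ioc_eq_integral_Ioo]
  have hsub : Ioo 0 (π/2) ⊆ Icc (-(π/2)) (π/2) := fun θ hθ =>
    Set.mem_Icc.2 ⟨by linarith [hθ.1, pi_pos], hθ.2.le⟩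
  rw [← sin_image]
  rw [integral_image_eq_integral_abs_deriv_smul measurableSet_Ioo
    (fun θ _ => (Real.hasDerivAt_sin θ).hasDerivWithinAt)
    (Real.injOn_sin.mono hsub)]
  apply setIntegral_congr_fun measurableSet_Ioo
  intro θ hθ
  dsimp only
  have hcos : 0 < Real.cos θ :=
    Real.cos_pos_of_mem_Ioo ⟨by linarith [hθ.1, pi_pos], hθ.2⟩
  have hs : 1 - Real.sin θ ^ 2 = Real.cos θ ^ 2 := by
    rw [Real.cos_sq']
  have hr2 : 0 ≤ 1 - r^2 * Real.sin θ ^ 2 → True := fun _ => trivial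
  rw [smul_eq_mul, abs_of_pos hcos, hs,
    Real.sqrt_mul (by positivity) (1 - r^2 * Real.sin θ ^ 2),
    Real.sqrt_sq hcos.le]
  field_simp

/-- `K(r) = (π/2)·₂F₁(1/2,1/2;1;r²)` for `|r| < 1`, with the hypergeometric
series converging. -/
theorem ellK_eq_hypergeometric (r : ℝ) (hr : |r| < 1) :
    Summable (fun n : ℕ =>
      (poch (1/2) n) ^ 2 / (poch 1 n * (Nat.factorial n : ℝ)) * r ^ (2 * n)) ∧
    ellK r = Real.pi / 2 * ∑' n : ℕ,
      (poch (1/2) n) ^ 2 / (poch 1 n * (Nat.factorial n : ℝ)) * r ^ (2 * n) := by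
  have hr2 : r ^ 2 < 1 := by rw [← sq_abs]; nlinarith [abs_nonneg r]
  have hr2' : (0:ℝ) ≤ r ^ 2 := sq_nonneg r
  have hterm : ∀ n : ℕ, (poch (1/2) n) ^ 2 / (poch 1 n * (Nat.factorial n : ℝ)) *
      r ^ (2 * n) = A n ^ 2 * (r ^ 2) ^ n := by
    intro n
    rw [poch_one, A, div_pow, pow_mul]
    ring
  have hgeo : Summable (fun n : ℕ => (r ^ 2) ^ n) :=
    summable_geometric_of_lt_one hr2' hr2
  have hA2 : Summable (fun n : ℕ => A n ^ 2 * (r ^ 2) ^ n) := by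
    apply Summable.of_norm_bounded hgeo
    intro n
    rw [Real.norm_eq_abs, abs_of_nonneg (by positivity)]
    nlinarith [A_pos n, A_le_one n, pow_nonneg hr2' n,
      mul_le_mul_of_nonneg_right (A_le_one n) (pow_nonneg hr2' n)]
  have hsummable : Summable (fun n : ℕ =>
      (poch (1/2) n) ^ 2 / (poch 1 n * (Nat.factorial n : ℝ)) * r ^ (2 * n)) :=
    hA2.congr (fun n => (hterm n).symm)
  refine ⟨hsummable, ?_⟩
  -- pointwise expansion
  set f : ℕ → ℝ → ℝ := fun n θ => A n * (r ^ 2) ^ n * Real.sin θ ^ (2 * n) with hf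
  have hpoint : ∀ θ : ℝ, 1 / Real.sqrt (1 - r^2 * Real.sin θ ^ 2) = ∑' n, f n θ := by
    intro θ
    have hx0 : 0 ≤ r ^ 2 * Real.sin θ ^ 2 := by positivity
    have hx1 : r ^ 2 * Real.sin θ ^ 2 < 1 := by
      nlinarith [Real.sin_sq_le_one θ, sq_nonneg r]
    rw [← binomial_half hx0 hx1]
    apply tsum_congr
    intro n
    simp only [hf, pow_mul, mul_pow]
    ring
  have hπ : (0:ℝ) ≤ π / 2 := by positivity
  -- each f n is integrable on Ioc
  have hfc : ∀ n, Continuous (f n) := fun n => by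
    apply Continuous.mul continuous_const
    exact (Real.continuous_sin.pow _)
  have hint : ∀ n, IntegrableOn (f n) (Ioc 0 (π/2)) volume := fun n => by
    rw [← intervalIntegrable_iff_integrableOn_Ioc_of_le hπ]
    exact (hfc n).intervalIntegrable 0 (π/2)
  have hfnonneg : ∀ n θ, 0 ≤ f n θ := fun n θ =>
    mul_nonneg (mul_nonneg (A_pos n).le (pow_nonneg hr2' n))
      ((even_two_mul n).pow_nonneg _)
  have hintval : ∀ n, (∫ θ in Ioc 0 (π/2), f n θ) = π/2 * (A n ^ 2 * (r^2)^n) := by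
    intro n
    rw [← integral_of_le hπ]
    rw [hf]
    simp only
    rw [intervalIntegral.integral_const_mul, wallis]
    ring
  have hnorm_sum : Summable (fun n => ∫ θ in Ioc 0 (π/2), ‖f n θ‖) := by
    have : (fun n => ∫ θ in Ioc 0 (π/2), ‖f n θ‖)
        = fun n => π/2 * (A n ^ 2 * (r^2)^n) := by
      funext n
      rw [← hintval n]
      apply setIntegral_congr_fun measurableSet_Ioc
      intro θ _
      exact Real.norm_of_nonneg (hfnonneg n θ)
    rw [this]
    exact hA2.mul_left _
  have hswap := integral_tsum_of_summable_integral_norm hint hnorm_sum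
  have : ellK r = ∑' n, (∫ θ in Ioc 0 (π/2), f n θ) := by
    rw [ellK_eq_trig r, integral_of_le hπ, hswap]
    apply setIntegral_congr_fun measurableSet_Ioc
    intro θ _
    exact hpoint θ
  rw [this]
  rw [tsum_congr hintval, tsum_mul_left]
  congr 1
  exact (tsum_congr (fun n => (hterm n))).symm ▸ rfl
end

section
/- Let η : ℝ → ℂ be twice differentiable at the point t with η′(t) ≠ 0, and let A : ℝ → ℂ be differentiable at t with A(t) ≠ 0. Then the generalized Neumann kernel N(s,t) = (1/π)·Im[(A(s)/A(t))·η′(t)/(η(t)−η(s))] extends continuously to s = t; more precisely, lim_{s→t, s≠t} (1/π)·Im[(A(s)/A(t))·η′(t)/(η(t)−η(s))] = (1/π)·[(1/2)·Im(η″(t)/η′(t)) − Im(A′(t)/A(t))]. -/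
open Filter Topology Asymptotics

lemma neumann_alg (a b e d p : ℂ) (hb : b ≠ 0) (he : e ≠ 0) (hd : d ≠ 0) :
    a / b * ((e - d * p) / d ^ 2 * (d / e)) + -((a - b) / d) * b⁻¹
      = a / b * p / (-e) + 1 / d := by
  field_simp
  ring

lemma abs_sub_le_of_mem_uIcc {t s u : ℝ} (hu : u ∈ Set.uIcc t s) : |u - t| ≤ |s - t| := by
  rcases Set.mem_uIcc.mp hu with h | h
  · rw [abs_of_nonneg (by linarith [h.1]), abs_of_nonneg (by linarith [h.1, h.2])]
    linarith [h.2]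
  · rw [abs_of_nonpos (by linarith [h.2]), abs_of_nonpos (by linarith [h.1, h.2])]
    linarith [h.1]

lemma taylor2_aux (η η' : ℝ → ℂ) (η'' : ℂ) (t : ℝ)
    (hη : ∀ᶠ s in 𝓝 t, HasDerivAt η (η' s) s)
    (hη2 : HasDerivAt η' η'' t) :
    Tendsto (fun s : ℝ => (η s - η t - ((s : ℂ) - t) * η' t) / ((s : ℂ) - t) ^ 2)
      (𝓝[≠] t) (𝓝 (η'' / 2)) := by
  set F : ℝ → ℂ := fun s => η s - η t - ((s : ℂ) - t) * η' t - ((s : ℂ) - t) ^ 2 * (η'' / 2)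
    with hF
  have hFderiv : ∀ᶠ u in 𝓝 t,
      HasDerivAt F (η' u - η' t - ((u : ℂ) - t) * η'') u := by
    filter_upwards [hη] with u hu
    have h1 : HasDerivAt (fun u : ℝ => ((u : ℂ) - t)) 1 u := by
      simpa using (Complex.ofRealCLM.hasDerivAt (x := u)).sub_const (t : ℂ)
    have h2 : HasDerivAt (fun u : ℝ => ((u : ℂ) - t) * η' t) (η' t) u := by
      simpa using h1.mul_const (η' t)
    have h3 : HasDerivAt (fun u : ℝ => ((u : ℂ) - t) ^ 2 * (η'' / 2))
        (((u : ℂ) - t) * η'') u := by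
      have heq : (fun u : ℝ => ((u : ℂ) - t) ^ 2 * (η'' / 2))
          = fun u : ℝ => (((u : ℂ) - t) * ((u : ℂ) - t)) * (η'' / 2) := by
        funext v; ring
      rw [heq]
      exact ((h1.mul h1).mul_const (η'' / 2)).congr_deriv (by ring)
    exact ((hu.sub_const (η t)).sub h2).sub h3
  -- little-o estimate on F
  have hFo : (fun s : ℝ => F s) =o[𝓝 t] (fun s : ℝ => (s - t) ^ 2) := by
    rw [isLittleO_iff]
    intro c hc
    have ho := (hasDerivAt_iff_isLittleO.mp hη2)
    rw [isLittleO_iff] at ho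
    have hball := Metric.eventually_nhds_iff.mp (hFderiv.and (ho hc))
    obtain ⟨δ, hδ, hδ'⟩ := hball
    rw [Metric.eventually_nhds_iff]
    refine ⟨δ, hδ, fun s hs => ?_⟩
    have hsub : Set.uIcc t s ⊆ Metric.ball t δ := by
      intro u hu
      rw [Metric.mem_ball, Real.dist_eq]
      calc |u - t| ≤ |s - t| := abs_sub_le_of_mem_uIcc hu
        _ < δ := by rwa [← Real.dist_eq]
    have hmvt := Convex.norm_image_sub_le_of_norm_hasDerivWithin_le
      (f := F) (f' := fun u => η' u - η' t - ((u : ℂ) - t) * η'')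
      (s := Set.uIcc t s) (C := c * |s - t|)
      (fun u hu => ((hδ' (hsub hu)).1).hasDerivWithinAt)
      (fun u hu => by
        have h2 := (hδ' (hsub hu)).2
        have : ‖η' u - η' t - (u - t) • η''‖ ≤ c * ‖u - t‖ := h2
        have he : (u - t) • η'' = ((u : ℂ) - t) * η'' := by
          rw [Complex.real_smul]; push_cast; ring
        rw [he] at this
        refine this.trans ?_
        have hle : ‖u - t‖ ≤ |s - t| := by
          rw [Real.norm_eq_abs]; exact abs_sub_le_of_mem_uIcc hu
        nlinarith [le_of_lt hc])
      (convex_uIcc t s) Set.left_mem_uIcc Set.right_mem_uIcc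
    have hFt : F t = 0 := by simp [hF]
    rw [hFt, sub_zero] at hmvt
    calc ‖F s‖ ≤ c * |s - t| * ‖s - t‖ := hmvt
      _ = c * ‖(s - t) ^ 2‖ := by
        rw [Real.norm_eq_abs, Real.norm_eq_abs, abs_pow]; ring
  -- conclude
  have h0 : Tendsto (fun s : ℝ => F s / ((s : ℂ) - t) ^ 2) (𝓝[≠] t) (𝓝 0) := by
    have hFo' : (fun s : ℝ => F s) =o[𝓝[≠] t] (fun s : ℝ => (s - t) ^ 2) :=
      hFo.mono (nhdsWithin_le_nhds (s := {t}ᶜ))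
    have h2 : (fun s : ℝ => F s) =o[𝓝[≠] t] (fun s : ℝ => ((s : ℂ) - t) ^ 2) := by
      refine hFo'.trans_isBigO (isBigO_of_le _ fun s => ?_)
      have : ((s : ℂ) - t) = ((s - t : ℝ) : ℂ) := by push_cast; ring
      rw [this, norm_pow, norm_pow, Complex.norm_real]
    exact h2.tendsto_div_nhds_zero
  have key : ∀ᶠ s in 𝓝[≠] t,
      F s / ((s : ℂ) - t) ^ 2 + η'' / 2
        = (η s - η t - ((s : ℂ) - t) * η' t) / ((s : ℂ) - t) ^ 2 := by
    filter_upwards [self_mem_nhdsWithin] with s hs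
    have hne : ((s : ℂ) - t) ≠ 0 := by
      simp only [ne_eq, sub_eq_zero]
      exact_mod_cast hs
    field_simp [hF]
    ring
  have := (h0.add_const (η'' / 2))
  rw [zero_add] at this
  exact Tendsto.congr' key this

/-- The generalized Neumann kernel `N(s,t) = (1/π)·Im[(A(s)/A(t))·η′(t)/(η(t)−η(s))]`
extends continuously to `s = t`, with limit
`(1/π)·[(1/2)·Im(η″(t)/η′(t)) − Im(A′(t)/A(t))]`. -/
theorem neumann_kernel_diagonal_limit
    (η η' : ℝ → ℂ) (η'' : ℂ) (A : ℝ → ℂ) (A' : ℂ) (t : ℝ)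
    (hη : ∀ᶠ s in 𝓝 t, HasDerivAt η (η' s) s)
    (hη2 : HasDerivAt η' η'' t)
    (hη0 : η' t ≠ 0)
    (hA : HasDerivAt A A' t)
    (hA0 : A t ≠ 0) :
    Tendsto (fun s : ℝ => (1 / Real.pi) * ((A s / A t) * η' t / (η t - η s)).im)
      (𝓝[≠] t)
      (𝓝 ((1 / Real.pi) * ((1 / 2) * (η'' / η' t).im - (A' / A t).im))) := by
  -- slope of η tends to η' t
  have hηt : HasDerivAt η (η' t) t := hη.self_of_nhds
  have hslope : Tendsto (fun s : ℝ => (η s - η t) / ((s : ℂ) - t)) (𝓝[≠] t) (𝓝 (η' t)) := by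
    have := hasDerivAt_iff_tendsto_slope.mp hηt
    refine this.congr fun s => ?_
    simp only [slope_def_module, Complex.real_smul]
    rw [div_eq_inv_mul]
    push_cast
    ring_nf
  -- slope of A tends to A'
  have hAslope : Tendsto (fun s : ℝ => (A s - A t) / ((s : ℂ) - t)) (𝓝[≠] t) (𝓝 A') := by
    have := hasDerivAt_iff_tendsto_slope.mp hA
    refine this.congr fun s => ?_
    simp only [slope_def_module, Complex.real_smul]
    rw [div_eq_inv_mul]
    push_cast
    ring_nf
  -- eventually η s ≠ η t
  have hne : ∀ᶠ s in 𝓝[≠] t, η s ≠ η t := by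
    filter_upwards [hslope.eventually_ne hη0, self_mem_nhdsWithin] with s h1 hs
    intro h
    apply h1
    rw [h, sub_self, zero_div]
  have hst : ∀ᶠ s : ℝ in 𝓝[≠] t, ((s : ℂ) - t) ≠ 0 := by
    filter_upwards [self_mem_nhdsWithin] with s hs
    simp only [ne_eq, sub_eq_zero]
    exact_mod_cast hs
  -- the shifted function g tends to a finite complex limit
  set L : ℂ := η'' / 2 * (η' t)⁻¹ - A' * (A t)⁻¹ with hL
  have hg : Tendsto (fun s : ℝ => (A s / A t) * η' t / (η t - η s) + 1 / ((s : ℂ) - t))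
      (𝓝[≠] t) (𝓝 L) := by
    -- h-part
    have hT2 : Tendsto (fun s : ℝ => ((s : ℂ) - t) / (η s - η t)) (𝓝[≠] t) (𝓝 (η' t)⁻¹) := by
      have := hslope.inv₀ hη0
      refine this.congr' ?_
      filter_upwards [hst] with s hs
      rw [inv_div]
    have hT1 := taylor2_aux η η' η'' t hη hη2
    have hAq : Tendsto (fun s : ℝ => A s / A t) (𝓝[≠] t) (𝓝 1) := by
      have hc : Tendsto A (𝓝[≠] t) (𝓝 (A t)) :=
        (hA.continuousAt.tendsto).mono_left nhdsWithin_le_nhds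
      have := hc.div_const (A t)
      rwa [div_self hA0] at this
    have hcomb : Tendsto (fun s : ℝ =>
        (A s / A t) * ((η s - η t - ((s : ℂ) - t) * η' t) / ((s : ℂ) - t) ^ 2
          * (((s : ℂ) - t) / (η s - η t)))
        + (-((A s - A t) / ((s : ℂ) - t)) * (A t)⁻¹)) (𝓝[≠] t)
        (𝓝 (1 * (η'' / 2 * (η' t)⁻¹) + (-A' * (A t)⁻¹))) := by
      exact (hAq.mul (hT1.mul hT2)).add ((hAslope.neg.mul_const _))
    rw [show (1 : ℂ) * (η'' / 2 * (η' t)⁻¹) + (-A' * (A t)⁻¹) = L by rw [hL]; ring] at hcomb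
    refine hcomb.congr' ?_
    filter_upwards [hne, hst] with s h1 h2
    have h3 : η s - η t ≠ 0 := sub_ne_zero.mpr h1
    have hrw : η t - η s = -(η s - η t) := by ring
    rw [hrw]
    exact neumann_alg (A s) (A t) (η s - η t) ((s : ℂ) - t) (η' t) hA0 h3 h2
  -- imaginary parts
  have him : Tendsto (fun s : ℝ => ((A s / A t) * η' t / (η t - η s)).im) (𝓝[≠] t) (𝓝 L.im) := by
    have := (Complex.continuous_im.tendsto L).comp hg
    refine this.congr' ?_
    filter_upwards [self_mem_nhdsWithin] with s hs
    have : ((1 : ℂ) / ((s : ℂ) - t)).im = 0 := by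
      have : ((s : ℂ) - t) = ((s - t : ℝ) : ℂ) := by push_cast; ring
      rw [this, ← Complex.ofReal_one, ← Complex.ofReal_div, Complex.ofReal_im]
    simp only [Function.comp_apply, Complex.add_im, this, add_zero]
  -- identify the imaginary part of L
  have hLim : L.im = (1 / 2) * (η'' / η' t).im - (A' / A t).im := by
    have h1 : η'' / 2 * (η' t)⁻¹ = ((1 / 2 : ℝ) : ℂ) * (η'' / η' t) := by
      push_cast
      field_simp
    have h2 : A' * (A t)⁻¹ = A' / A t := (div_eq_mul_inv A' (A t)).symm
    rw [hL, Complex.sub_im, h1, h2]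
    simp [Complex.mul_im]
  rw [← hLim]
  exact him.const_mul _
end

section
/- Let η : ℝ → ℂ be twice differentiable at the point t with η′(t) ≠ 0, and let A : ℝ → ℂ be differentiable at t with A(t) ≠ 0. Then the kernel M(s,t) = (1/π)·Re[(A(s)/A(t))·η′(t)/(η(t)−η(s))] differs from −(1/(2π))·cot((s−t)/2) by a function that extends continuously to s = t; more precisely, lim_{s→t, s≠t} [ (1/π)·Re[(A(s)/A(t))·η′(t)/(η(t)−η(s))] + (1/(2π))·cot((s−t)/2) ] = (1/π)·[(1/2)·Re(η″(t)/η′(t)) − Re(A′(t)/A(t))]. -/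
open Filter Topology

/-- Second-order Taylor limit for real-valued functions, via L'Hôpital. -/
lemma aux_second_order_real (f f' : ℝ → ℝ) (f'' t : ℝ)
    (hf : ∀ᶠ s in 𝓝 t, HasDerivAt f (f' s) s) (hf2 : HasDerivAt f' f'' t) :
    Tendsto (fun s => (f s - f t - f' t * (s - t)) / (s - t) ^ 2) (𝓝[≠] t) (𝓝 (f'' / 2)) := by
  apply HasDerivAt.lhopital_zero_nhdsNE (f' := fun s => f' s - f' t) (g' := fun s => 2 * (s - t))
  · filter_upwards [nhdsWithin_le_nhds hf] with s hs
    have h1 : HasDerivAt (fun x : ℝ => f' t * (x - t)) (f' t) s := by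
      simpa using ((hasDerivAt_id s).sub_const t).const_mul (f' t)
    simpa [Pi.sub_def] using (hs.sub_const (f t)).sub h1
  · filter_upwards with s
    have := ((hasDerivAt_id s).sub_const t).pow 2
    simpa [mul_comm, Pi.pow_def] using this
  · filter_upwards [self_mem_nhdsWithin] with s hs
    have : s - t ≠ 0 := sub_ne_zero.mpr hs
    positivity
  · apply tendsto_nhdsWithin_of_tendsto_nhds
    have hc : ContinuousAt f t := hf.self_of_nhds.continuousAt
    have : Tendsto (fun s => f s - f t - f' t * (s - t)) (𝓝 t) (𝓝 (f t - f t - f' t * (t - t))) := by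
      exact ((hc.tendsto.sub tendsto_const_nhds).sub
        ((tendsto_id.sub_const t).const_mul (f' t)))
    simpa using this
  · apply tendsto_nhdsWithin_of_tendsto_nhds
    have : Tendsto (fun s : ℝ => (s - t) ^ 2) (𝓝 t) (𝓝 ((t - t) ^ 2)) := by
      exact ((tendsto_id.sub_const t).pow 2)
    simpa using this
  · have hslope := hasDerivAt_iff_tendsto_slope.mp hf2
    have := hslope.div_const 2
    apply this.congr'
    filter_upwards [self_mem_nhdsWithin] with s hs
    have hst : s - t ≠ 0 := sub_ne_zero.mpr hs
    rw [slope_def_field, div_div, mul_comm]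

/-- Second-order Taylor limit for complex-valued functions of a real variable. -/
lemma aux_second_order_cx (f f' : ℝ → ℂ) (f'' : ℂ) (t : ℝ)
    (hf : ∀ᶠ s in 𝓝 t, HasDerivAt f (f' s) s) (hf2 : HasDerivAt f' f'' t) :
    Tendsto (fun s => (f s - f t - (s - t : ℝ) * f' t) / ((s - t : ℝ) : ℂ) ^ 2) (𝓝[≠] t)
      (𝓝 (f'' / 2)) := by
  have hre : ∀ᶠ s in 𝓝 t, HasDerivAt (fun x => (f x).re) (f' s).re s := by
    filter_upwards [hf] with s hs
    exact (Complex.reCLM.hasFDerivAt.comp_hasDerivAt s hs)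
  have him : ∀ᶠ s in 𝓝 t, HasDerivAt (fun x => (f x).im) (f' s).im s := by
    filter_upwards [hf] with s hs
    exact (Complex.imCLM.hasFDerivAt.comp_hasDerivAt s hs)
  have hre2 : HasDerivAt (fun s => (f' s).re) f''.re t :=
    Complex.reCLM.hasFDerivAt.comp_hasDerivAt t hf2
  have him2 : HasDerivAt (fun s => (f' s).im) f''.im t :=
    Complex.imCLM.hasFDerivAt.comp_hasDerivAt t hf2
  have HR := aux_second_order_real _ _ _ t hre hre2
  have HI := aux_second_order_real _ _ _ t him him2
  have H := (HR.ofReal.add (HI.ofReal.mul_const Complex.I))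
  have key : ∀ s : ℝ,
      (((f s - f t - (s - t : ℝ) * f' t) / ((s - t : ℝ) : ℂ) ^ 2 : ℂ)) =
      ((((f s).re - (f t).re - (f' t).re * (s - t)) / (s - t) ^ 2 : ℝ) : ℂ)
        + ((((f s).im - (f t).im - (f' t).im * (s - t)) / (s - t) ^ 2 : ℝ) : ℂ) * Complex.I := by
    intro s
    have h2 : ((s - t : ℝ) : ℂ) ^ 2 = (((s - t) ^ 2 : ℝ) : ℂ) := by push_cast; ring
    rw [h2]
    apply Complex.ext
    · simp only [Complex.div_ofReal_re, Complex.add_re, Complex.mul_re, Complex.I_re,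
        Complex.I_im, Complex.ofReal_re, Complex.ofReal_im, Complex.sub_re]
      ring
    · simp only [Complex.div_ofReal_im, Complex.add_im, Complex.mul_im, Complex.I_re,
        Complex.I_im, Complex.ofReal_re, Complex.ofReal_im, Complex.sub_im, Complex.mul_re]
      ring
  have key2 : (f'' / 2 : ℂ) = ((f''.re / 2 : ℝ) : ℂ) + ((f''.im / 2 : ℝ) : ℂ) * Complex.I := by
    rw [show ((f''.re / 2 : ℝ) : ℂ) + ((f''.im / 2 : ℝ) : ℂ) * Complex.I
        = ((f''.re : ℂ) + (f''.im : ℂ) * Complex.I) / 2 by push_cast; ring,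
      Complex.re_add_im]
  rw [key2]
  exact H.congr (fun s => (key s).symm)

/-- sin x ≠ 0 for 0 < |x| < π. -/
lemma aux_sin_ne_zero {x : ℝ} (hx : x ≠ 0) (hx2 : |x| < Real.pi) : Real.sin x ≠ 0 := by
  rcases lt_or_gt_of_ne hx with h | h
  · have : Real.sin (-x) > 0 := by
      apply Real.sin_pos_of_pos_of_lt_pi (by linarith)
      calc -x ≤ |x| := by rw [abs_of_neg h]
        _ < Real.pi := hx2
    rw [Real.sin_neg] at this
    linarith
  · have : Real.sin x > 0 := by
      apply Real.sin_pos_of_pos_of_lt_pi h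
      calc x ≤ |x| := le_abs_self x
        _ < Real.pi := hx2
    linarith

/-- The cotangent correction term tends to 0. -/
lemma aux_cot : Tendsto (fun u : ℝ => (1 / 2) * Real.cot (u / 2) - u⁻¹)
    (𝓝[≠] (0 : ℝ)) (𝓝 0) := by
  -- F u / u², F u = u cos(u/2) - 2 sin(u/2), tends to 0
  have hF : Tendsto (fun u : ℝ => (u * Real.cos (u / 2) - 2 * Real.sin (u / 2)) / u ^ 2)
      (𝓝[≠] (0 : ℝ)) (𝓝 0) := by
    apply HasDerivAt.lhopital_zero_nhdsNE
      (f' := fun u => -(u * Real.sin (u / 2)) / 2) (g' := fun u => 2 * u)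
    · filter_upwards with u
      have h2 : HasDerivAt (fun x : ℝ => x / 2) (1 / 2) u := by
        simpa using (hasDerivAt_id u).div_const 2
      have hcos : HasDerivAt (fun x : ℝ => Real.cos (x / 2)) (-Real.sin (u / 2) * (1 / 2)) u :=
        ((Real.hasDerivAt_cos (u / 2)).comp u h2 :)
      have hsin : HasDerivAt (fun x : ℝ => Real.sin (x / 2)) (Real.cos (u / 2) * (1 / 2)) u :=
        ((Real.hasDerivAt_sin (u / 2)).comp u h2 :)
      have := ((hasDerivAt_id u).mul hcos).sub (hsin.const_mul 2)
      simp only [Pi.sub_def, Pi.mul_def, id_eq] at this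
      refine this.congr_deriv ?_
      ring
    · filter_upwards with u
      simpa [mul_comm, Pi.pow_def] using ((hasDerivAt_id u).pow 2)
    · filter_upwards [self_mem_nhdsWithin] with u hu
      replace hu : u ≠ 0 := hu
      simp [hu]
    · apply tendsto_nhdsWithin_of_tendsto_nhds
      have : Tendsto (fun u : ℝ => u * Real.cos (u / 2) - 2 * Real.sin (u / 2)) (𝓝 0)
          (𝓝 (0 * Real.cos (0 / 2) - 2 * Real.sin (0 / 2))) := by
        apply Tendsto.sub
        · exact tendsto_id.mul ((Real.continuous_cos.comp (continuous_id.div_const 2)).tendsto 0)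
        · exact ((Real.continuous_sin.comp (continuous_id.div_const 2)).tendsto 0).const_mul 2
      simpa using this
    · apply tendsto_nhdsWithin_of_tendsto_nhds
      simpa using ((continuous_pow 2).tendsto (0:ℝ))
    · have : Tendsto (fun u : ℝ => -Real.sin (u / 2) / 4) (𝓝[≠] 0) (𝓝 (-Real.sin (0 / 2) / 4)) := by
        apply tendsto_nhdsWithin_of_tendsto_nhds
        exact (((Real.continuous_sin.comp (continuous_id.div_const 2)).neg.div_const 4).tendsto 0)
      simp only [zero_div, Real.sin_zero, neg_zero] at this
      apply this.congr'
      filter_upwards [self_mem_nhdsWithin] with u hu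
      replace hu : u ≠ 0 := hu
      field_simp
      ring
  -- G u / u², G u = 2 u sin(u/2), tends to 1
  have hsinc : Tendsto (fun u : ℝ => Real.sin u / u) (𝓝[≠] (0:ℝ)) (𝓝 1) := by
    have := hasDerivAt_iff_tendsto_slope.mp (Real.hasDerivAt_sin 0)
    simp only [Real.cos_zero] at this
    apply this.congr
    intro u
    rw [slope_def_field]
    simp
  have hhalf : Tendsto (fun u : ℝ => u / 2) (𝓝[≠] (0:ℝ)) (𝓝[≠] (0:ℝ)) := by
    apply tendsto_nhdsWithin_of_tendsto_nhds_of_eventually_within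
    · exact tendsto_nhdsWithin_of_tendsto_nhds
        (by simpa using ((continuous_id.div_const 2).tendsto (0:ℝ)))
    · filter_upwards [self_mem_nhdsWithin] with u hu
      replace hu : u ≠ 0 := hu
      show u / 2 ≠ 0
      intro h; apply hu; linarith [div_eq_zero_iff.mp h]
  have hG : Tendsto (fun u : ℝ => (2 * u * Real.sin (u / 2)) / u ^ 2) (𝓝[≠] (0:ℝ)) (𝓝 1) := by
    have := hsinc.comp hhalf
    apply this.congr'
    filter_upwards [self_mem_nhdsWithin] with u hu
    replace hu : u ≠ 0 := hu
    simp only [Function.comp]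
    field_simp
  have hdivlim := hF.div hG one_ne_zero
  rw [div_one] at hdivlim
  apply hdivlim.congr'
  -- eventual equality
  have hmem : {u : ℝ | |u| < Real.pi} ∈ 𝓝[≠] (0:ℝ) := by
    apply nhdsWithin_le_nhds
    have : Tendsto (fun u : ℝ => |u|) (𝓝 0) (𝓝 |0|) := continuous_abs.tendsto 0
    simp only [abs_zero] at this
    exact this (Iio_mem_nhds Real.pi_pos)
  filter_upwards [self_mem_nhdsWithin, hmem] with u hu hpi
  replace hu : u ≠ 0 := hu
  replace hpi : |u| < Real.pi := hpi
  have hs : Real.sin (u / 2) ≠ 0 := by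
    apply aux_sin_ne_zero (by positivity)
    rw [abs_div]
    calc |u| / |(2:ℝ)| ≤ |u| := by
          rw [abs_two]; linarith [abs_nonneg u, div_le_self (abs_nonneg u) (by norm_num : (1:ℝ) ≤ 2)]
      _ < Real.pi := hpi
  simp only [Pi.div_apply]
  rw [Real.cot_eq_cos_div_sin]
  field_simp

/-- The kernel `M(s,t) = (1/π)·Re[(A(s)/A(t))·η′(t)/(η(t)−η(s))]` differs from
`−(1/(2π))·cot((s−t)/2)` by a function extending continuously to `s = t`, with limit
`(1/π)·[(1/2)·Re(η″(t)/η′(t)) − Re(A′(t)/A(t))]`. -/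
theorem singular_kernel_M_diagonal_limit
    (η η' : ℝ → ℂ) (η'' : ℂ) (A : ℝ → ℂ) (A' : ℂ) (t : ℝ)
    (hη : ∀ᶠ s in 𝓝 t, HasDerivAt η (η' s) s)
    (hη2 : HasDerivAt η' η'' t)
    (hη0 : η' t ≠ 0)
    (hA : HasDerivAt A A' t)
    (hA0 : A t ≠ 0) :
    Tendsto (fun s : ℝ =>
        (1 / Real.pi) * ((A s / A t) * η' t / (η t - η s)).re
          + (1 / (2 * Real.pi)) * Real.cot ((s - t) / 2))
      (𝓝[≠] t)
      (𝓝 ((1 / Real.pi) * ((1 / 2) * (η'' / η' t).re - (A' / A t).re))) := by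
  -- slope limits
  have hslopeA : Tendsto (fun s => (A s - A t) / ((s - t : ℝ) : ℂ)) (𝓝[≠] t) (𝓝 A') := by
    have := hasDerivAt_iff_tendsto_slope.mp hA
    apply this.congr
    intro s
    simp only [slope, vsub_eq_sub, Complex.real_smul, Complex.ofReal_inv]
    rw [inv_mul_eq_div]
  have hslopeη : Tendsto (fun s => (η s - η t) / ((s - t : ℝ) : ℂ)) (𝓝[≠] t) (𝓝 (η' t)) := by
    have := hasDerivAt_iff_tendsto_slope.mp hη.self_of_nhds
    apply this.congr
    intro s
    simp only [slope, vsub_eq_sub, Complex.real_smul, Complex.ofReal_inv]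
    rw [inv_mul_eq_div]
  -- second-order limit
  have hQ := aux_second_order_cx η η' η'' t hη hη2
  -- numerator limit
  have hN : Tendsto (fun s => ((η s - η t) - (A s / A t) * η' t * ((s - t : ℝ) : ℂ))
      / ((s - t : ℝ) : ℂ) ^ 2) (𝓝[≠] t) (𝓝 (η'' / 2 - A' / A t * η' t)) := by
    have := hQ.sub ((hslopeA.div_const (A t)).mul_const (η' t))
    apply this.congr'
    filter_upwards [self_mem_nhdsWithin] with s hs
    replace hs : s ≠ t := hs
    have hst : ((s - t : ℝ) : ℂ) ≠ 0 := by
      simp only [ne_eq, Complex.ofReal_eq_zero]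
      exact sub_ne_zero.mpr hs
    generalize hz : ((s - t : ℝ) : ℂ) = z at hst ⊢
    field_simp
    ring
  -- denominator limit
  have hD : Tendsto (fun s => (((s - t : ℝ) : ℂ) * (η s - η t)) / ((s - t : ℝ) : ℂ) ^ 2)
      (𝓝[≠] t) (𝓝 (η' t)) := by
    apply hslopeη.congr'
    filter_upwards [self_mem_nhdsWithin] with s hs
    replace hs : s ≠ t := hs
    have hst : ((s - t : ℝ) : ℂ) ≠ 0 := by
      simp only [ne_eq, Complex.ofReal_eq_zero]
      exact sub_ne_zero.mpr hs
    generalize hz : ((s - t : ℝ) : ℂ) = z at hst ⊢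
    rw [sq, mul_div_mul_left _ _ hst]
  -- eventually η s ≠ η t
  have hne : ∀ᶠ s in 𝓝[≠] t, η s ≠ η t := by
    have h0 := hslopeη.eventually_ne hη0
    filter_upwards [h0] with s hs
    intro h
    apply hs
    simp [h]
  -- combined complex limit
  have hg : Tendsto (fun s => (((s - t : ℝ) : ℂ))⁻¹ + (A s / A t) * η' t / (η t - η s))
      (𝓝[≠] t) (𝓝 ((η'' / 2 - A' / A t * η' t) / η' t)) := by
    have := hN.div hD hη0
    apply this.congr'
    filter_upwards [self_mem_nhdsWithin, hne] with s hs hne'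
    replace hs : s ≠ t := hs
    have hst : ((s - t : ℝ) : ℂ) ≠ 0 := by
      simp only [ne_eq, Complex.ofReal_eq_zero]
      exact sub_ne_zero.mpr hs
    have hde : η s - η t ≠ 0 := sub_ne_zero.mpr hne'
    have hde' : η t - η s ≠ 0 := fun h => hde (by
      rw [← neg_sub] at h; simpa using neg_eq_zero.mp h)
    simp only [Pi.div_apply]
    generalize hz : ((s - t : ℝ) : ℂ) = z at hst ⊢
    field_simp
    ring
  -- real part of combined limit
  have hgre : Tendsto (fun s => ((((s - t : ℝ) : ℂ))⁻¹ + (A s / A t) * η' t / (η t - η s)).re)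
      (𝓝[≠] t) (𝓝 (((η'' / 2 - A' / A t * η' t) / η' t).re)) :=
    (Complex.continuous_re.tendsto _).comp hg
  -- cotangent part
  have hsub : Tendsto (fun s : ℝ => s - t) (𝓝[≠] t) (𝓝[≠] (0:ℝ)) := by
    apply tendsto_nhdsWithin_of_tendsto_nhds_of_eventually_within
    · exact tendsto_nhdsWithin_of_tendsto_nhds
        (by simpa using ((continuous_sub_right t).tendsto t))
    · filter_upwards [self_mem_nhdsWithin] with s hs
      replace hs : s ≠ t := hs
      show s - t ≠ 0
      exact sub_ne_zero.mpr hs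
  have hcot : Tendsto (fun s : ℝ => (1 / 2) * Real.cot ((s - t) / 2) - (s - t)⁻¹)
      (𝓝[≠] t) (𝓝 0) := aux_cot.comp hsub
  -- assemble
  have hsum := (hgre.add hcot).const_mul (1 / Real.pi)
  have hval : (1 / Real.pi) * ((1 / 2) * (η'' / η' t).re - (A' / A t).re)
      = (1 / Real.pi) * ((((η'' / 2 - A' / A t * η' t) / η' t).re) + 0) := by
    have hL : (η'' / 2 - A' / A t * η' t) / η' t = (η'' / η' t) * (1 / 2 : ℂ) - A' / A t := by
      field_simp
    rw [hL]
    rw [Complex.sub_re, Complex.mul_re]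
    norm_num
    exact mul_comm _ _
  rw [hval]
  apply hsum.congr'
  filter_upwards [self_mem_nhdsWithin] with s hs
  replace hs : s ≠ t := hs
  have hst : (s - t : ℝ) ≠ 0 := sub_ne_zero.mpr hs
  rw [Complex.add_re]
  rw [show ((((s - t : ℝ) : ℂ))⁻¹).re = (s - t)⁻¹ by
    rw [← Complex.ofReal_inv, Complex.ofReal_re]]
  have hpi : Real.pi ≠ 0 := Real.pi_ne_zero
  field_simp
  ring
end
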